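/- arXiv:2209.10575 — 3 statements merged into one kernel-verified Lean document; each statement's English description precedes it below -/
import Mathlib

section
/- Fix μ ≥ 0 and let R : ℝ^p × ℝ^q → ℝ_+ ∪ {+∞} be lower semicontinuous, level compact if μ = 0 and 1-coercive if μ > 0. Let {η_k} be a strictly increasing sequence with η_k > η̄ for all k and η_k → ∞, and for each k let ((β^k,γ^k),(β̃^k,γ̃^k)) ∈ (ℝ^p×ℝ^q) × (ℝ^p×ℝ_+^q) be an optimal solution of min L_{η_k,μ}((β,γ),(β̃,γ̃)) + R(β̃,γ̃). Then every cluster point ((β̄,γ̄),(β̂,γ̂)) of the sequence {((β^k,γ^k),(β̃^k,γ̃^k))} satisfies (β̄,γ̄) = (β̂,γ̂), and (β̄,γ̄) is an optimal solution of min_{(β,γ) ∈ ℝ^p×ℝ_+^q} L(β,γ) + φ_μ(γ) + R(β,γ). -/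
open Matrix Real Filter Topology Bornology
open scoped Pointwise

noncomputable section

abbrev Vec (k : ℕ) : Type := Fin k → ℝ

/-- Euclidean norm of a vector. -/
def eNorm {ι : Type*} [Fintype ι] (x : ι → ℝ) : ℝ := Real.sqrt (∑ j, (x j) ^ 2)

/-- Squared Euclidean norm of a pair of vectors. -/
def sqnorm2 {p q : ℕ} (w : Vec p × Vec q) : ℝ :=
  (∑ j, (w.1 j) ^ 2) + ∑ j, (w.2 j) ^ 2

/-- ℓ²→ℓ² operator norm of a matrix (its largest singular value). -/
def opNorm {ι κ : Type*} [Fintype ι] [Fintype κ] (M : Matrix ι κ ℝ) : ℝ :=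
  sInf {c : ℝ | 0 ≤ c ∧ ∀ x : κ → ℝ, eNorm (M.mulVec x) ≤ c * eNorm x}

/-- Smallest eigenvalue of a symmetric matrix, via Rayleigh quotients. -/
def minEig {ι : Type*} [Fintype ι] (M : Matrix ι ι ℝ) : ℝ :=
  sInf {r : ℝ | ∃ x : ι → ℝ, eNorm x = 1 ∧ r = x ⬝ᵥ M.mulVec x}

/-- Largest eigenvalue of a symmetric matrix, via Rayleigh quotients. -/
def maxEig {ι : Type*} [Fintype ι] (M : Matrix ι ι ℝ) : ℝ :=
  sSup {r : ℝ | ∃ x : ι → ℝ, eNorm x = 1 ∧ r = x ⬝ᵥ M.mulVec x}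

/-- The log-barrier (perspective of the negative log). -/
def phiBar (μ : ℝ) {q : ℕ} (γ : Vec q) : EReal :=
  if μ = 0 then (if ∀ j, 0 ≤ γ j then (0 : EReal) else ⊤)
  else if 0 < μ then
    (if ∀ j, 0 < γ j then (((-μ) * ∑ j, Real.log (γ j / μ) : ℝ) : EReal) else ⊤)
  else ⊤

/-- The coupling function κ_η. -/
def kappaFun (η : ℝ) {p q : ℕ} (w : Vec p × Vec q) : ℝ := η / 2 * sqnorm2 w

/-- 1-coercivity: liminf of F(w)/‖w‖ as ‖w‖ → ∞ is positive. -/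
def OneCoercive {p q : ℕ} (R : Vec p × Vec q → EReal) : Prop :=
  ∃ c : ℝ, 0 < c ∧ ∃ r : ℝ, ∀ w : Vec p × Vec q,
    r ≤ Real.sqrt (sqnorm2 w) → ((c * Real.sqrt (sqnorm2 w) : ℝ) : EReal) ≤ R w

/-- Data of a linear mixed-effects model. -/
structure LMEData (m p q : ℕ) where
  n : Fin m → ℕ
  X : ∀ i, Matrix (Fin (n i)) (Fin p) ℝ
  Z : ∀ i, Matrix (Fin (n i)) (Fin q) ℝ
  y : ∀ i, Fin (n i) → ℝ
  lam : ∀ i, Matrix (Fin (n i)) (Fin (n i)) ℝ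

namespace LMEData

variable {m p q : ℕ}

/-- Ω_i(Γ) = Z_i Γ Z_iᵀ + Λ_i. -/
def Omega (D : LMEData m p q) (Γ : Matrix (Fin q) (Fin q) ℝ) (i : Fin m) :
    Matrix (Fin (D.n i)) (Fin (D.n i)) ℝ :=
  D.Z i * Γ * (D.Z i)ᵀ + D.lam i

/-- The marginal negative log-likelihood L_ML(β, Γ). -/
def LML (D : LMEData m p q) (β : Vec p) (Γ : Matrix (Fin q) (Fin q) ℝ) : ℝ :=
  ∑ i, ((1 : ℝ) / 2 * ((D.y i - D.X i *ᵥ β) ⬝ᵥ ((D.Omega Γ i)⁻¹ *ᵥ (D.y i - D.X i *ᵥ β)))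
    + (1 : ℝ) / 2 * Real.log (D.Omega Γ i).det)

/-- L(β, γ) = L_ML(β, Diag γ). -/
def L (D : LMEData m p q) (β : Vec p) (γ : Vec q) : ℝ := D.LML β (Matrix.diagonal γ)

/-- ν = max_i (1/2) μ_min(Λ_i)^{-2} σ_max(Z_i)^4. -/
def nu (D : LMEData m p q) : ℝ :=
  ⨆ i : Fin m, (1 : ℝ) / 2 * ((minEig (D.lam i)) ^ 2)⁻¹ * (opNorm (D.Z i)) ^ 4

/-- η̄ = ν m. -/
def etabar (D : LMEData m p q) : ℝ := D.nu * m

/-- L_{η,μ}((β,γ),(β̃,γ̃)) = L(β,γ) + φ_μ(γ) + κ_η(β−β̃,γ−γ̃). -/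
def Lrelax (D : LMEData m p q) (η μ : ℝ) (x w : Vec p × Vec q) : EReal :=
  ((D.L x.1 x.2 + kappaFun η (x - w) : ℝ) : EReal) + phiBar μ x.2

/-- The optimal value function u_{η,μ} (with extended-real values). -/
def uval (D : LMEData m p q) (η μ : ℝ) (w : Vec p × Vec q) : EReal :=
  ⨅ x : Vec p × Vec q, D.Lrelax η μ x w

/-- The (real-valued) optimal value function u_{η,μ}. -/
def ufun (D : LMEData m p q) (η μ : ℝ) (w : Vec p × Vec q) : ℝ := (D.uval η μ w).toReal

/-- Partial gradient ∇_β L. -/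
def gradB (D : LMEData m p q) (β : Vec p) (γ : Vec q) : Vec p :=
  fun j => fderiv ℝ (fun b => D.L b γ) β (Pi.single j 1)

/-- Partial gradient ∇_γ L. -/
def gradG (D : LMEData m p q) (β : Vec p) (γ : Vec q) : Vec q :=
  fun j => fderiv ℝ (fun g => D.L β g) γ (Pi.single j 1)

/-- The map G_{η,μ}. -/
def Gmap (D : LMEData m p q) (η μ : ℝ) (x : Vec p × Vec q × Vec q) (w : Vec p × Vec q) :
    Vec p × Vec q × Vec q :=
  (D.gradB x.1 x.2.1 + η • (x.1 - w.1),
   D.gradG x.1 x.2.1 + η • (x.2.1 - w.2) - x.2.2,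
   fun j => x.2.2 j * x.2.1 j - μ)

/-- Second-derivative block ∇²_{ββ} L. -/
def hessBB (D : LMEData m p q) (β : Vec p) (γ : Vec q) : Matrix (Fin p) (Fin p) ℝ :=
  Matrix.of fun j k => fderiv ℝ (fun b => D.gradB b γ j) β (Pi.single k 1)

/-- Second-derivative block ∇²_{γγ} L. -/
def hessGG (D : LMEData m p q) (β : Vec p) (γ : Vec q) : Matrix (Fin q) (Fin q) ℝ :=
  Matrix.of fun j k => fderiv ℝ (fun g => D.gradG β g j) γ (Pi.single k 1)

/-- Second-derivative block ∇²_{γβ} L (the p×q cross block). -/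
def hessGB (D : LMEData m p q) (β : Vec p) (γ : Vec q) : Matrix (Fin p) (Fin q) ℝ :=
  Matrix.of fun j k => fderiv ℝ (fun g => D.gradB β g j) γ (Pi.single k 1)

/-- Second-derivative block ∇²_{βγ} L (the q×p cross block). -/
def hessBG (D : LMEData m p q) (β : Vec p) (γ : Vec q) : Matrix (Fin q) (Fin p) ℝ :=
  Matrix.of fun j k => fderiv ℝ (fun b => D.gradG b γ j) β (Pi.single k 1)

end LMEData

/-- f(r, M) = (1/2)(rᵀM⁻¹r + ln det M). -/
def fRM {n : ℕ} (r : Vec n) (M : Matrix (Fin n) (Fin n) ℝ) : ℝ :=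
  (1 : ℝ) / 2 * (r ⬝ᵥ (M⁻¹ *ᵥ r) + Real.log M.det)


section AuxConsistency

open Filter Topology

lemma sqnorm2_nonneg' {p q : ℕ} (w : Vec p × Vec q) : 0 ≤ sqnorm2 w := by
  unfold sqnorm2; positivity

lemma sqnorm2_eq_zero' {p q : ℕ} {w : Vec p × Vec q} (h : sqnorm2 w = 0) : w = 0 := by
  unfold sqnorm2 at h
  have h1 : ∑ j, (w.1 j) ^ 2 = 0 := by
    have := Finset.sum_nonneg (fun j (_ : j ∈ Finset.univ) => sq_nonneg (w.1 j))
    have := Finset.sum_nonneg (fun j (_ : j ∈ Finset.univ) => sq_nonneg (w.2 j))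
    linarith
  have h2 : ∑ j, (w.2 j) ^ 2 = 0 := by
    have := Finset.sum_nonneg (fun j (_ : j ∈ Finset.univ) => sq_nonneg (w.1 j))
    linarith
  have e1 : ∀ j, w.1 j = 0 := fun j =>
    pow_eq_zero_iff (two_ne_zero) |>.mp
      ((Finset.sum_eq_zero_iff_of_nonneg (fun j _ => sq_nonneg (w.1 j))).mp h1 j (Finset.mem_univ j))
  have e2 : ∀ j, w.2 j = 0 := fun j =>
    pow_eq_zero_iff (two_ne_zero) |>.mp
      ((Finset.sum_eq_zero_iff_of_nonneg (fun j _ => sq_nonneg (w.2 j))).mp h2 j (Finset.mem_univ j))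
  exact Prod.ext (funext e1) (funext e2)

lemma continuous_sqnorm2 {p q : ℕ} : Continuous (sqnorm2 (p := p) (q := q)) := by
  unfold sqnorm2
  fun_prop

/-- The real value of the log-barrier on its domain. -/
def phiReal (μ : ℝ) {q : ℕ} (γ : Vec q) : ℝ :=
  if μ = 0 then 0 else -μ * ∑ j, Real.log (γ j / μ)

lemma phiBar_ne_bot {q : ℕ} (μ : ℝ) (γ : Vec q) : phiBar μ γ ≠ ⊥ := by
  unfold phiBar
  split_ifs <;> simp [← EReal.coe_mul, ← EReal.coe_neg]

lemma phiBar_eq_coe {q : ℕ} {μ : ℝ} (hμ : 0 ≤ μ) {γ : Vec q}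
    (h : ∀ j, 0 ≤ γ j) (h' : μ ≠ 0 → ∀ j, 0 < γ j) :
    phiBar μ γ = ((phiReal μ γ : ℝ) : EReal) := by
  unfold phiBar phiReal
  rcases eq_or_lt_of_le hμ with h0 | h0
  · rw [if_pos h0.symm, if_pos h, if_pos h0.symm]
    simp
  · rw [if_neg (ne_of_gt h0), if_pos h0, if_pos (h' (ne_of_gt h0)), if_neg (ne_of_gt h0)]

lemma phiBar_dom {q : ℕ} {μ : ℝ} (hμ : 0 ≤ μ) {γ : Vec q} (h : phiBar μ γ ≠ ⊤) :
    (∀ j, 0 ≤ γ j) ∧ (μ ≠ 0 → ∀ j, 0 < γ j) := by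
  unfold phiBar at h
  rcases eq_or_lt_of_le hμ with h0 | h0
  · rw [if_pos h0.symm] at h
    by_cases hg : ∀ j, 0 ≤ γ j
    · exact ⟨hg, fun hne => absurd h0.symm hne⟩
    · rw [if_neg hg] at h; exact absurd rfl h
  · rw [if_neg (ne_of_gt h0), if_pos h0] at h
    by_cases hg : ∀ j, 0 < γ j
    · exact ⟨fun j => (hg j).le, fun _ => hg⟩
    · rw [if_neg hg] at h; exact absurd rfl h

lemma contAt_phiReal {q : ℕ} {μ : ℝ} {γ0 : Vec q} (h : μ ≠ 0 → ∀ j, 0 < γ0 j) :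
    ContinuousAt (phiReal μ (q := q)) γ0 := by
  unfold phiReal
  by_cases h0 : μ = 0
  · simp only [if_pos h0]; exact continuousAt_const
  · simp only [if_neg h0]
    refine ContinuousAt.mul continuousAt_const ?_
    refine tendsto_finset_sum _ fun j _ => ?_
    have hin : ContinuousAt (fun γ : Vec q => γ j / μ) γ0 :=
      Continuous.continuousAt (by fun_prop)
    exact (Real.continuousAt_log (div_ne_zero (ne_of_gt (h h0 j)) h0)).tendsto.comp hin

lemma phiReal_anti {q : ℕ} {μ : ℝ} (hμ : 0 ≤ μ) {γ δ : Vec q}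
    (hγ : μ ≠ 0 → ∀ j, 0 < γ j) (hle : ∀ j, γ j ≤ δ j) :
    phiReal μ δ ≤ phiReal μ γ := by
  unfold phiReal
  by_cases h0 : μ = 0
  · simp [h0]
  · have hμ' : 0 < μ := lt_of_le_of_ne hμ (Ne.symm h0)
    simp only [if_neg h0, neg_mul]
    apply neg_le_neg
    apply mul_le_mul_of_nonneg_left _ hμ
    apply Finset.sum_le_sum
    intro j _
    have hpos := hγ h0 j
    have h1 : γ j / μ ≤ δ j / μ := by gcongr; exact hle j
    exact Real.log_le_log (div_pos hpos hμ') h1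

namespace LMEData

variable {m p q : ℕ}

lemma omega_posDef (D : LMEData m p q) (hlam : ∀ i, (D.lam i).PosDef)
    {γ : Vec q} (hγ : ∀ j, 0 ≤ γ j) (i : Fin m) : (D.Omega (Matrix.diagonal γ) i).PosDef := by
  have h1 : (Matrix.diagonal γ).PosSemidef := Matrix.posSemidef_diagonal_iff.mpr hγ
  have h2 : (D.Z i * Matrix.diagonal γ * (D.Z i)ᵀ).PosSemidef := by
    have := h1.mul_mul_conjTranspose_same (D.Z i)
    rwa [Matrix.conjTranspose_eq_transpose_of_trivial] at this
  exact Matrix.PosDef.posSemidef_add h2 (hlam i)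

lemma contAt_L (D : LMEData m p q) (hlam : ∀ i, (D.lam i).PosDef)
    {x0 : Vec p × Vec q} (h0 : ∀ j, 0 ≤ x0.2 j) :
    ContinuousAt (fun x : Vec p × Vec q => D.L x.1 x.2) x0 := by
  have key : ∀ i : Fin m, ContinuousAt (fun x : Vec p × Vec q =>
      (1:ℝ)/2 * ((D.y i - D.X i *ᵥ x.1) ⬝ᵥ
        ((D.Omega (Matrix.diagonal x.2) i)⁻¹ *ᵥ (D.y i - D.X i *ᵥ x.1)))
      + (1:ℝ)/2 * Real.log (D.Omega (Matrix.diagonal x.2) i).det) x0 := by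
    intro i
    have hΩc : Continuous (fun x : Vec p × Vec q => D.Omega (Matrix.diagonal x.2) i) := by
      unfold LMEData.Omega
      exact ((continuous_const.matrix_mul continuous_snd.matrix_diagonal).matrix_mul
        continuous_const).add continuous_const
    have hpd := D.omega_posDef hlam h0 i
    have hdetne : (D.Omega (Matrix.diagonal x0.2) i).det ≠ 0 := ne_of_gt hpd.det_pos
    have hinv : ContinuousAt (fun x : Vec p × Vec q => (D.Omega (Matrix.diagonal x.2) i)⁻¹) x0 := by
      refine ContinuousAt.comp (continuousAt_matrix_inv _ ?_) hΩc.continuousAt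
      rw [Ring.inverse_eq_inv']
      exact continuousAt_inv₀ hdetne
    have hr : Continuous (fun x : Vec p × Vec q => D.y i - D.X i *ᵥ x.1) :=
      continuous_const.sub (continuous_const.matrix_mulVec continuous_fst)
    have hquad : ContinuousAt (fun x : Vec p × Vec q =>
        (D.y i - D.X i *ᵥ x.1) ⬝ᵥ
          ((D.Omega (Matrix.diagonal x.2) i)⁻¹ *ᵥ (D.y i - D.X i *ᵥ x.1))) x0 := by
      have houter : Continuous (fun y : (Fin (D.n i) → ℝ) × Matrix (Fin (D.n i)) (Fin (D.n i)) ℝ =>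
          y.1 ⬝ᵥ (y.2 *ᵥ y.1)) :=
        continuous_fst.dotProduct (continuous_snd.matrix_mulVec continuous_fst)
      exact houter.continuousAt.tendsto.comp (hr.continuousAt.prodMk hinv)
    have hlog : ContinuousAt (fun x : Vec p × Vec q =>
        Real.log (D.Omega (Matrix.diagonal x.2) i).det) x0 :=
      (Real.continuousAt_log hdetne).tendsto.comp hΩc.matrix_det.continuousAt
    exact (continuousAt_const.mul hquad).add (continuousAt_const.mul hlog)
  unfold LMEData.L LMEData.LML
  exact tendsto_finset_sum _ (fun i _ => key i)

end LMEData

end AuxConsistency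

attribute [irreducible] LMEData.L

set_option maxHeartbeats 2000000 in
/-- Consistency as η → ∞: cluster points of solutions of the relaxed
problems have equal components and solve the log-barrier problem. -/
theorem consistency_eta_to_infinity
    {m p q : ℕ} (hm : 0 < m) (hp : 0 < p) (hq : 0 < q)
    (D : LMEData m p q) (hn : ∀ i, 0 < D.n i) (hlam : ∀ i, (D.lam i).PosDef)
    (μ : ℝ) (hμ : 0 ≤ μ)
    (R : Vec p × Vec q → EReal) (hR0 : ∀ w, 0 ≤ R w)
    (hRlsc : LowerSemicontinuous R)
    (hRproper : ∃ w : Vec p × Vec q, (∀ j, 0 ≤ w.2 j) ∧ R w ≠ ⊤)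
    (hR0case : μ = 0 → ∀ c : ℝ, IsCompact {w : Vec p × Vec q | R w ≤ (c : EReal)})
    (hRpos : 0 < μ → OneCoercive R)
    (ηseq : ℕ → ℝ) (hmono : StrictMono ηseq) (hgt : ∀ k, D.etabar < ηseq k)
    (htop : Tendsto ηseq atTop atTop)
    (xseq wseq : ℕ → Vec p × Vec q)
    (hfeas : ∀ k j, 0 ≤ (wseq k).2 j)
    (hopt : ∀ k, ∀ x' w' : Vec p × Vec q, (∀ j, 0 ≤ w'.2 j) →
      D.Lrelax (ηseq k) μ (xseq k) (wseq k) + R (wseq k)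
        ≤ D.Lrelax (ηseq k) μ x' w' + R w')
    (xbar what : Vec p × Vec q)
    (hclus : MapClusterPt (xbar, what) atTop (fun k => (xseq k, wseq k))) :
    xbar = what ∧ (∀ j, 0 ≤ xbar.2 j) ∧
      ∀ x : Vec p × Vec q, (∀ j, 0 ≤ x.2 j) →
        (D.L xbar.1 xbar.2 : EReal) + phiBar μ xbar.2 + R xbar
          ≤ (D.L x.1 x.2 : EReal) + phiBar μ x.2 + R x := by
  classical
  obtain ⟨w₀, hw₀f, hw₀R⟩ := hRproper
  have hnu : 0 ≤ D.nu := Real.iSup_nonneg fun i => by positivity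
  have hetabar : 0 ≤ D.etabar := mul_nonneg hnu (Nat.cast_nonneg m)
  have hηpos : ∀ k, 0 < ηseq k := fun k => lt_of_le_of_lt hetabar (hgt k)
  have hRnb : ∀ w, R w ≠ ⊥ := fun w => (EReal.bot_lt_zero.trans_le (hR0 w)).ne'
  have hLrex : ∀ (η : ℝ) (x w : Vec p × Vec q), (∀ j, 0 ≤ x.2 j) → (μ ≠ 0 → ∀ j, 0 < x.2 j) →
      D.Lrelax η μ x w = ((D.L x.1 x.2 + kappaFun η (x - w) + phiReal μ x.2 : ℝ) : EReal) := by
    intro η x w h1 h2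
    unfold LMEData.Lrelax
    rw [phiBar_eq_coe hμ h1 h2, ← EReal.coe_add]
  have hx₀1 : ∀ j, (0:ℝ) ≤ ((w₀.1, fun j => w₀.2 j + 1) : Vec p × Vec q).2 j := by
    intro j; have := hw₀f j; simp only; linarith
  have hx₀2 : μ ≠ 0 → ∀ j, (0:ℝ) < ((w₀.1, fun j => w₀.2 j + 1) : Vec p × Vec q).2 j := by
    intro _ j; have := hw₀f j; simp only; linarith
  have hfin : ∀ k, D.Lrelax (ηseq k) μ (xseq k) (wseq k) + R (wseq k) ≠ ⊤ := by
    intro k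
    refine ne_top_of_le_ne_top ?_ (hopt k (w₀.1, fun j => w₀.2 j + 1) w₀ hw₀f)
    rw [hLrex (ηseq k) _ w₀ hx₀1 hx₀2]
    exact (EReal.add_lt_top (EReal.coe_ne_top _) hw₀R).ne
  have hLrnb : ∀ (η : ℝ) (x w : Vec p × Vec q), D.Lrelax η μ x w ≠ ⊥ := by
    intro η x w
    unfold LMEData.Lrelax
    simp [EReal.add_eq_bot_iff, phiBar_ne_bot]
  have hRwk : ∀ k, R (wseq k) ≠ ⊤ := by
    intro k h
    exact hfin k (by rw [h, EReal.add_top_of_ne_bot (hLrnb _ _ _)])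
  have hLrk : ∀ k, D.Lrelax (ηseq k) μ (xseq k) (wseq k) ≠ ⊤ := by
    intro k h
    exact hfin k (by rw [h, EReal.top_add_of_ne_bot (hRnb _)])
  have hdom : ∀ k, (∀ j, 0 ≤ (xseq k).2 j) ∧ (μ ≠ 0 → ∀ j, 0 < (xseq k).2 j) := by
    intro k
    refine phiBar_dom hμ (fun h => hLrk k ?_)
    unfold LMEData.Lrelax
    rw [h, EReal.add_top_of_ne_bot (EReal.coe_ne_bot _)]
  have hρcoe : ∀ k, ((R (wseq k)).toReal : EReal) = R (wseq k) := fun k =>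
    EReal.coe_toReal (hRwk k) (hRnb _)
  have hρ0 : ∀ k, 0 ≤ (R (wseq k)).toReal := by
    intro k
    have h := hR0 (wseq k)
    rw [← hρcoe k] at h
    exact_mod_cast h
  have hreal : ∀ (k : ℕ) (x' w' : Vec p × Vec q), (∀ j, 0 ≤ w'.2 j) →
      (∀ j, 0 ≤ x'.2 j) → (μ ≠ 0 → ∀ j, 0 < x'.2 j) → R w' ≠ ⊤ →
      D.L (xseq k).1 (xseq k).2 + kappaFun (ηseq k) (xseq k - wseq k) + phiReal μ (xseq k).2
        + (R (wseq k)).toReal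
      ≤ D.L x'.1 x'.2 + kappaFun (ηseq k) (x' - w') + phiReal μ x'.2 + (R w').toReal := by
    intro k x' w' hf h1 h2 hRt
    have h := hopt k x' w' hf
    rw [hLrex _ _ _ (hdom k).1 (hdom k).2, hLrex _ _ _ h1 h2] at h
    conv_lhs at h => rw [← hρcoe k, ← EReal.coe_add]
    conv_rhs at h => rw [← EReal.coe_toReal hRt (hRnb w'), ← EReal.coe_add]
    exact_mod_cast h
  obtain ⟨ψ, hψmono, hψt⟩ := TopologicalSpace.FirstCountableTopology.tendsto_subseq hclus
  have hxt : Tendsto (fun j => xseq (ψ j)) atTop (𝓝 xbar) :=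
    (continuous_fst.tendsto _).comp hψt
  have hwt : Tendsto (fun j => wseq (ψ j)) atTop (𝓝 what) :=
    (continuous_snd.tendsto _).comp hψt
  have hxt2 : Tendsto (fun j => (xseq (ψ j)).2) atTop (𝓝 xbar.2) :=
    (continuous_snd.tendsto _).comp hxt
  have hcoord : ∀ j' : Fin q, Tendsto (fun j => (xseq (ψ j)).2 j') atTop (𝓝 (xbar.2 j')) :=
    fun j' => ((continuous_apply j').tendsto _).comp hxt2
  have hxbar2 : ∀ j', 0 ≤ xbar.2 j' := fun j' =>
    ge_of_tendsto' (hcoord j') (fun k => (hdom (ψ k)).1 j')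
  have hwhat2 : ∀ j', 0 ≤ what.2 j' := by
    intro j'
    have h : Tendsto (fun j => (wseq (ψ j)).2 j') atTop (𝓝 (what.2 j')) :=
      ((continuous_apply j').tendsto _).comp ((continuous_snd.tendsto _).comp hwt)
    exact ge_of_tendsto' h (fun k => hfeas (ψ k) j')
  have hLa : Tendsto (fun j => D.L (xseq (ψ j)).1 (xseq (ψ j)).2) atTop
      (𝓝 (D.L xbar.1 xbar.2)) := (D.contAt_L hlam hxbar2).tendsto.comp hxt
  have hevb : ∀ᶠ j in atTop, ∀ j' : Fin q, (xseq (ψ j)).2 j' ≤ xbar.2 j' + 1 := by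
    rw [eventually_all]
    intro j'
    exact ((hcoord j').eventually_lt_const (by linarith)).mono fun j h => h.le
  have key : ∀ ε : ℝ, 0 < ε → sqnorm2 (xbar - what) ≤ (q : ℝ) * ε ^ 2 := by
    intro ε hε
    set Bφ : ℝ := phiReal μ (fun j' => xbar.2 j' + 1) with hBφ
    have hwε : Tendsto (fun j => (((wseq (ψ j)).1, fun j' => (wseq (ψ j)).2 j' + ε) :
        Vec p × Vec q)) atTop (𝓝 ((what.1, fun j' => what.2 j' + ε) : Vec p × Vec q)) := by
      have hcont : Continuous (fun w : Vec p × Vec q =>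
          ((w.1, fun j' => w.2 j' + ε) : Vec p × Vec q)) :=
        continuous_fst.prodMk (continuous_pi fun j' =>
          ((continuous_apply j').comp continuous_snd).add continuous_const)
      exact hcont.continuousAt.tendsto.comp hwt
    have hL't : Tendsto (fun j => D.L (wseq (ψ j)).1 (fun j' => (wseq (ψ j)).2 j' + ε)) atTop
        (𝓝 (D.L what.1 (fun j' => what.2 j' + ε))) := by
      have hc := D.contAt_L hlam (x0 := ((what.1, fun j' => what.2 j' + ε) : Vec p × Vec q))
        (fun j' => add_nonneg (hwhat2 j') hε.le)
      exact hc.tendsto.comp hwε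
    have hφ't : Tendsto (fun j => phiReal μ (fun j' => (wseq (ψ j)).2 j' + ε)) atTop
        (𝓝 (phiReal μ (fun j' => what.2 j' + ε))) := by
      have hc := contAt_phiReal (μ := μ) (γ0 := fun j' => what.2 j' + ε)
        (fun _ j' => add_pos_of_nonneg_of_pos (hwhat2 j') hε)
      have hcont2 : Continuous (fun w : Vec p × Vec q => (fun j' => w.2 j' + ε : Vec q)) :=
        continuous_pi fun j' => ((continuous_apply j').comp continuous_snd).add continuous_const
      exact hc.tendsto.comp (hcont2.continuousAt.tendsto.comp hwt)
    have hdt : Tendsto (fun j => sqnorm2 (xseq (ψ j) - wseq (ψ j))) atTop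
        (𝓝 (sqnorm2 (xbar - what))) :=
      (continuous_sqnorm2.tendsto _).comp (hxt.sub hwt)
    have hψat : Tendsto (fun j => ηseq (ψ j)) atTop atTop := htop.comp hψmono.tendsto_atTop
    have hinv0 : Tendsto (fun j => 2 / ηseq (ψ j)) atTop (𝓝 0) :=
      Filter.Tendsto.div_atTop tendsto_const_nhds hψat
    have hconst : Tendsto (fun _ : ℕ => (q : ℝ) * ε ^ 2) atTop (𝓝 ((q : ℝ) * ε ^ 2)) :=
      tendsto_const_nhds
    have hBconst : Tendsto (fun _ : ℕ => Bφ) atTop (𝓝 Bφ) := tendsto_const_nhds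
    have hUt : Tendsto (fun j => 2 / ηseq (ψ j) *
        (D.L (wseq (ψ j)).1 (fun j' => (wseq (ψ j)).2 j' + ε)
          - D.L (xseq (ψ j)).1 (xseq (ψ j)).2 - Bφ
          + phiReal μ (fun j' => (wseq (ψ j)).2 j' + ε)) + (q : ℝ) * ε ^ 2) atTop
        (𝓝 ((q : ℝ) * ε ^ 2)) := by
      have h := (hinv0.mul (((hL't.sub hLa).sub hBconst).add hφ't)).add hconst
      simpa using h
    refine le_of_tendsto_of_tendsto hdt hUt ?_
    filter_upwards [hevb] with j hj
    have hφlb : Bφ ≤ phiReal μ ((xseq (ψ j)).2) := by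
      rw [hBφ]
      exact phiReal_anti hμ ((hdom (ψ j)).2) (fun j' => hj j')
    have hη := hηpos (ψ j)
    have h := hreal (ψ j) ((wseq (ψ j)).1, fun j' => (wseq (ψ j)).2 j' + ε) (wseq (ψ j))
      (hfeas (ψ j))
      (fun j' => add_nonneg (hfeas (ψ j) j') hε.le)
      (fun _ j' => add_pos_of_nonneg_of_pos (hfeas (ψ j) j') hε)
      (hRwk (ψ j))
    have hκ : kappaFun (ηseq (ψ j))
        ((((wseq (ψ j)).1, fun j' => (wseq (ψ j)).2 j' + ε) : Vec p × Vec q) - wseq (ψ j))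
        = ηseq (ψ j) / 2 * ((q : ℝ) * ε ^ 2) := by
      unfold kappaFun sqnorm2
      simp [Prod.fst_sub, Prod.snd_sub, Pi.sub_apply, add_sub_cancel_left,
        Finset.sum_const, Finset.card_univ, nsmul_eq_mul]
    rw [hκ] at h
    have hκd : kappaFun (ηseq (ψ j)) (xseq (ψ j) - wseq (ψ j))
        = ηseq (ψ j) / 2 * sqnorm2 (xseq (ψ j) - wseq (ψ j)) := rfl
    rw [hκd] at h
    have h2 : ηseq (ψ j) / 2 * sqnorm2 (xseq (ψ j) - wseq (ψ j))
        ≤ (D.L (wseq (ψ j)).1 (fun j' => (wseq (ψ j)).2 j' + ε)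
            - D.L (xseq (ψ j)).1 (xseq (ψ j)).2 - Bφ
            + phiReal μ (fun j' => (wseq (ψ j)).2 j' + ε))
          + ηseq (ψ j) / 2 * ((q : ℝ) * ε ^ 2) := by linarith
    have hmul := mul_le_mul_of_nonneg_left h2 (le_of_lt (div_pos two_pos hη))
    have e1 : 2 / ηseq (ψ j) * (ηseq (ψ j) / 2 * sqnorm2 (xseq (ψ j) - wseq (ψ j)))
        = sqnorm2 (xseq (ψ j) - wseq (ψ j)) := by
      field_simp
    have e2 : 2 / ηseq (ψ j) * ((D.L (wseq (ψ j)).1 (fun j' => (wseq (ψ j)).2 j' + ε)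
            - D.L (xseq (ψ j)).1 (xseq (ψ j)).2 - Bφ
            + phiReal μ (fun j' => (wseq (ψ j)).2 j' + ε))
          + ηseq (ψ j) / 2 * ((q : ℝ) * ε ^ 2))
        = 2 / ηseq (ψ j) * (D.L (wseq (ψ j)).1 (fun j' => (wseq (ψ j)).2 j' + ε)
            - D.L (xseq (ψ j)).1 (xseq (ψ j)).2 - Bφ
            + phiReal μ (fun j' => (wseq (ψ j)).2 j' + ε)) + (q : ℝ) * ε ^ 2 := by
      field_simp
    rw [e1, e2] at hmul
    exact hmul
  have heq : xbar = what := by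
    have hd0 : sqnorm2 (xbar - what) ≤ 0 := by
      by_contra hlt
      push_neg at hlt
      have hq' : (0:ℝ) < q := by exact_mod_cast hq
      have hε : (0:ℝ) < Real.sqrt (sqnorm2 (xbar - what) / (2 * q)) :=
        Real.sqrt_pos.mpr (by positivity)
      have hk := key _ hε
      rw [Real.sq_sqrt (by positivity)] at hk
      have he : (q:ℝ) * (sqnorm2 (xbar - what) / (2 * q)) = sqnorm2 (xbar - what) / 2 := by
        field_simp
      rw [he] at hk
      linarith
    exact sub_eq_zero.mp (sqnorm2_eq_zero' (le_antisymm hd0 (sqnorm2_nonneg' _)))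
  refine ⟨heq, hxbar2, ?_⟩
  intro x hxf
  by_cases hφx : phiBar μ x.2 = ⊤
  · rw [hφx, EReal.add_top_of_ne_bot (EReal.coe_ne_bot _),
      EReal.top_add_of_ne_bot (hRnb x)]
    exact le_top
  by_cases hRx : R x = ⊤
  · have hnb : (D.L x.1 x.2 : EReal) + phiBar μ x.2 ≠ ⊥ := by
      simp [EReal.add_eq_bot_iff, phiBar_ne_bot]
    rw [hRx, EReal.add_top_of_ne_bot hnb]
    exact le_top
  obtain ⟨hx1, hx2⟩ := phiBar_dom hμ hφx
  have hRxcoe : ((R x).toReal : EReal) = R x := EReal.coe_toReal hRx (hRnb x)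
  set c : ℝ := D.L x.1 x.2 + phiReal μ x.2 + (R x).toReal with hc
  have hck : ∀ k, D.L (xseq k).1 (xseq k).2 + phiReal μ (xseq k).2 + (R (wseq k)).toReal ≤ c := by
    intro k
    have h := hreal k x x hxf hx1 hx2 hRx
    have hκ0 : kappaFun (ηseq k) (x - x) = 0 := by
      simp [kappaFun, sqnorm2]
    have hκ1 : 0 ≤ kappaFun (ηseq k) (xseq k - wseq k) := by
      unfold kappaFun
      exact mul_nonneg (div_nonneg (hηpos k).le (by norm_num)) (sqnorm2_nonneg' _)
    rw [hκ0] at h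
    rw [hc]
    linarith
  have hxbarpos : μ ≠ 0 → ∀ j', 0 < xbar.2 j' := by
    intro h0 j0
    have hμ' : 0 < μ := lt_of_le_of_ne hμ (Ne.symm h0)
    by_contra hno
    have hx0 : xbar.2 j0 = 0 := le_antisymm (not_lt.mp hno) (hxbar2 j0)
    set M : ℝ := c - D.L xbar.1 xbar.2 + 1 with hMdef
    have hM : ∀ᶠ j in atTop, phiReal μ ((xseq (ψ j)).2) ≤ M := by
      have hev1 : ∀ᶠ j in atTop, D.L xbar.1 xbar.2 - 1 ≤ D.L (xseq (ψ j)).1 (xseq (ψ j)).2 :=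
        hLa.eventually (eventually_ge_nhds (by linarith))
      filter_upwards [hev1] with j hj
      have h1 := hck (ψ j)
      have h2 := hρ0 (ψ j)
      rw [hMdef]
      linarith
    set s : Vec q := fun j' => xbar.2 j' + 1 with hs
    set S : ℝ := ∑ i ∈ Finset.univ.erase j0, Real.log (s i / μ) with hS
    have hev2 : ∀ᶠ j in atTop, μ * Real.exp (-(M / μ) - S) ≤ (xseq (ψ j)).2 j0 := by
      filter_upwards [hM, hevb] with j hj1 hj2
      have hbpos : 0 < (xseq (ψ j)).2 j0 := (hdom (ψ j)).2 h0 j0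
      have hle : phiReal μ (Function.update s j0 ((xseq (ψ j)).2 j0))
          ≤ phiReal μ ((xseq (ψ j)).2) := by
        refine phiReal_anti hμ ((hdom (ψ j)).2) (fun j' => ?_)
        by_cases hj' : j' = j0
        · subst hj'; rw [Function.update_self]
        · rw [Function.update_of_ne hj', hs]
          exact hj2 j'
      have hupdate : phiReal μ (Function.update s j0 ((xseq (ψ j)).2 j0))
          = -μ * (Real.log ((xseq (ψ j)).2 j0 / μ) + S) := by
        rw [hS]
        unfold phiReal
        rw [if_neg h0]
        congr 1
        rw [← Finset.add_sum_erase Finset.univ _ (Finset.mem_univ j0), Function.update_self]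
        congr 1
        refine Finset.sum_congr rfl (fun i hi => ?_)
        rw [Function.update_of_ne (Finset.ne_of_mem_erase hi)]
      have h1 : -μ * (Real.log ((xseq (ψ j)).2 j0 / μ) + S) ≤ M := by
        rw [← hupdate]; exact le_trans hle hj1
      have h2 : -(M / μ) - S ≤ Real.log ((xseq (ψ j)).2 j0 / μ) := by
        have h2' : -M ≤ μ * (Real.log ((xseq (ψ j)).2 j0 / μ) + S) := by linarith
        have h2'' : -M / μ ≤ Real.log ((xseq (ψ j)).2 j0 / μ) + S := by
          rw [div_le_iff₀ hμ']
          linarith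
        rw [neg_div] at h2''
        linarith
      have h3 : Real.exp (-(M / μ) - S) ≤ (xseq (ψ j)).2 j0 / μ := by
        have hh := Real.exp_le_exp.mpr h2
        rwa [Real.exp_log (div_pos hbpos hμ')] at hh
      have h4 : μ * Real.exp (-(M / μ) - S) ≤ μ * ((xseq (ψ j)).2 j0 / μ) :=
        mul_le_mul_of_nonneg_left h3 hμ
      have h5 : μ * ((xseq (ψ j)).2 j0 / μ) = (xseq (ψ j)).2 j0 := by
        field_simp
      rw [h5] at h4
      exact h4
    have hge := ge_of_tendsto (hcoord j0) hev2
    rw [hx0] at hge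
    have hpos : 0 < μ * Real.exp (-(M / μ) - S) := mul_pos hμ' (Real.exp_pos _)
    linarith
  have hφt : Tendsto (fun j => phiReal μ ((xseq (ψ j)).2)) atTop (𝓝 (phiReal μ xbar.2)) :=
    (contAt_phiReal hxbarpos).tendsto.comp hxt2
  set sinf : ℝ := c - D.L xbar.1 xbar.2 - phiReal μ xbar.2 with hsinf
  have hst : Tendsto (fun j => c - D.L (xseq (ψ j)).1 (xseq (ψ j)).2
      - phiReal μ ((xseq (ψ j)).2)) atTop (𝓝 sinf) :=
    (tendsto_const_nhds.sub hLa).sub hφt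
  have hRle : R xbar ≤ (sinf : EReal) := by
    by_contra hcon
    push_neg at hcon
    obtain ⟨y, hy1, hy2⟩ := exists_between hcon
    have hyt : y ≠ ⊤ := ne_top_of_lt hy2
    have hyb : y ≠ ⊥ := ((EReal.bot_lt_coe _).trans hy1).ne'
    have hyco : ((y.toReal : ℝ) : EReal) = y := EReal.coe_toReal hyt hyb
    have hwt' : Tendsto (fun j => wseq (ψ j)) atTop (𝓝 xbar) := by
      rw [heq]; exact hwt
    have hev3 : ∀ᶠ j in atTop, y < R (wseq (ψ j)) := hwt'.eventually (hRlsc xbar y hy2)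
    have hev4 : ∀ᶠ j in atTop, y.toReal ≤ c - D.L (xseq (ψ j)).1 (xseq (ψ j)).2
        - phiReal μ ((xseq (ψ j)).2) := by
      filter_upwards [hev3] with j hj
      have hρle : (R (wseq (ψ j))).toReal ≤ c - D.L (xseq (ψ j)).1 (xseq (ψ j)).2
          - phiReal μ ((xseq (ψ j)).2) := by
        have := hck (ψ j); linarith
      have hylt : y.toReal < (R (wseq (ψ j))).toReal := by
        have hx : (y.toReal : EReal) < ((R (wseq (ψ j))).toReal : EReal) := by
          rw [hyco, hρcoe]; exact hj
        exact_mod_cast hx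
      linarith
    have hle2 := ge_of_tendsto hst hev4
    have hlt2 : sinf < y.toReal := by
      have hx : (sinf : EReal) < (y.toReal : EReal) := by rw [hyco]; exact hy1
      exact_mod_cast hx
    linarith
  rw [phiBar_eq_coe hμ hxbar2 hxbarpos, phiBar_eq_coe hμ hx1 hx2, ← hRxcoe]
  calc (D.L xbar.1 xbar.2 : EReal) + ((phiReal μ xbar.2 : ℝ) : EReal) + R xbar
      ≤ (D.L xbar.1 xbar.2 : EReal) + ((phiReal μ xbar.2 : ℝ) : EReal) + (sinf : EReal) :=
        add_le_add_right hRle _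
    _ = ((D.L xbar.1 xbar.2 + phiReal μ xbar.2 + sinf : ℝ) : EReal) := by
        rw [EReal.coe_add, EReal.coe_add]
    _ = ((D.L x.1 x.2 + phiReal μ x.2 + (R x).toReal : ℝ) : EReal) := by
        congr 1
        rw [hsinf, hc]
        ring
    _ = (D.L x.1 x.2 : EReal) + ((phiReal μ x.2 : ℝ) : EReal) + ((R x).toReal : EReal) := by
        rw [EReal.coe_add, EReal.coe_add]
end
end

section
/- Let n ≥ 1, let r ∈ ℝ^n, and let M ∈ ℝ^{n×n} be symmetric positive definite with largest eigenvalue λ_max(M) and smallest eigenvalue λ_min(M). Then f(r, M) ≥ (1/2) ln λ_max(M) + ((n−1)/2) ln λ_min(M), and if r ≠ 0 then also f(r, M) ≥ (1/2)(1 + ln(‖r‖²/n)) + ((n−1)/2) ln λ_min(M). -/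
open Matrix Real Filter Topology Bornology
open scoped Pointwise

noncomputable section

theorem auxConjQuad {n : ℕ} (U : Matrix (Fin n) (Fin n) ℝ) (d : Fin n → ℝ) (x : Fin n → ℝ) :
    x ⬝ᵥ (U * diagonal d * star U) *ᵥ x = ∑ i, d i * ((star U *ᵥ x) i)^2 := by
  set y := star U *ᵥ x with hy
  rw [← mulVec_mulVec, ← mulVec_mulVec, dotProduct_mulVec, ← mulVec_transpose]
  have hUT : Uᵀ = star U := rfl
  rw [hUT, ← hy]
  simp only [dotProduct, mulVec_diagonal]
  exact Finset.sum_congr rfl (fun i _ => by ring)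

theorem auxSpecR {n : ℕ} (M : Matrix (Fin n) (Fin n) ℝ) (hH : M.IsHermitian) :
    M = (hH.eigenvectorUnitary : Matrix (Fin n) (Fin n) ℝ) * diagonal hH.eigenvalues
      * star (hH.eigenvectorUnitary : Matrix (Fin n) (Fin n) ℝ) := by
  convert hH.spectral_theorem using 3
  simp [Unitary.conjStarAlgAut_apply, RCLike.ofReal_real_eq_id]

theorem auxInvSpec {n : ℕ} (U : Matrix (Fin n) (Fin n) ℝ) (h1 : star U * U = 1)
    (h2 : U * star U = 1) (d : Fin n → ℝ) (hd : ∀ i, d i ≠ 0) :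
    (U * diagonal d * star U)⁻¹ = U * diagonal (fun i => (d i)⁻¹) * star U := by
  apply inv_eq_right_inv
  calc (U * diagonal d * star U) * (U * diagonal (fun i => (d i)⁻¹) * star U)
      = U * (diagonal d * ((star U * U) * diagonal (fun i => (d i)⁻¹))) * star U := by
        simp only [Matrix.mul_assoc]
    _ = U * (diagonal d * diagonal (fun i => (d i)⁻¹)) * star U := by rw [h1, Matrix.one_mul]
    _ = U * star U := by
        rw [diagonal_mul_diagonal]
        conv_lhs => rw [show (fun i => d i * (d i)⁻¹) = fun _ => (1:ℝ) from
          funext fun i => mul_inv_cancel₀ (hd i)]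
        rw [show (diagonal fun _ : Fin n => (1:ℝ)) = 1 from diagonal_one, Matrix.mul_one]
    _ = 1 := h2

/-- Umbrella spectral lemma. -/
theorem auxExistsSpec {n : ℕ} (M : Matrix (Fin n) (Fin n) ℝ) (hM : M.PosDef) :
    ∃ d : Fin n → ℝ,
      (∀ i, 0 < d i) ∧
      M.det = ∏ i, d i ∧
      (∃ T : (Fin n → ℝ) → (Fin n → ℝ),
        (∀ x, x ⬝ᵥ M *ᵥ x = ∑ i, d i * (T x i)^2) ∧
        (∀ x, x ⬝ᵥ M⁻¹ *ᵥ x = ∑ i, (d i)⁻¹ * (T x i)^2) ∧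
        (∀ x, ∑ i, (T x i)^2 = ∑ i, (x i)^2) ∧
        (∀ i, ∃ v : Fin n → ℝ, (∑ j, (v j)^2 = 1) ∧ v ⬝ᵥ M *ᵥ v = d i)) := by
  set U := (hM.1.eigenvectorUnitary : Matrix (Fin n) (Fin n) ℝ) with hUdef
  set d := hM.1.eigenvalues with hddef
  have h1 : star U * U = 1 := Matrix.mem_unitaryGroup_iff'.mp hM.1.eigenvectorUnitary.2
  have h2 : U * star U = 1 := Matrix.mem_unitaryGroup_iff.mp hM.1.eigenvectorUnitary.2
  have hdpos : ∀ i, 0 < d i := hM.eigenvalues_pos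
  have hMspec : M = U * diagonal d * star U := auxSpecR M hM.1
  have hdet : M.det = ∏ i, d i := by simpa using hM.1.det_eq_prod_eigenvalues
  have hinv : M⁻¹ = U * diagonal (fun i => (d i)⁻¹) * star U := by
    rw [hMspec]
    exact auxInvSpec U h1 h2 d (fun i => (hdpos i).ne')
  have hnp : ∀ x : Fin n → ℝ, ∑ i, ((star U *ᵥ x) i)^2 = ∑ i, (x i)^2 := by
    intro x
    have key : ∀ v : Fin n → ℝ, v ⬝ᵥ v = ∑ i, (v i)^2 := by
      intro v; simp [dotProduct, sq]
    rw [← key, ← key]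
    calc (star U *ᵥ x) ⬝ᵥ (star U *ᵥ x)
        = x ⬝ᵥ ((star U)ᵀ *ᵥ (star U *ᵥ x)) := by
          rw [dotProduct_mulVec, mulVec_transpose, dotProduct_comm]
      _ = x ⬝ᵥ x := by
          have hT : (star U)ᵀ = U := rfl
          rw [hT, mulVec_mulVec, h2, one_mulVec]
  refine ⟨d, hdpos, hdet, fun x => star U *ᵥ x, ?_, ?_, hnp, ?_⟩
  · intro x; rw [hMspec]; exact auxConjQuad U d x
  · intro x; rw [hinv]; exact auxConjQuad U _ x
  · intro i
    have hs : star U *ᵥ (U *ᵥ Pi.single i 1) = Pi.single i 1 := by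
      rw [mulVec_mulVec, h1, one_mulVec]
    refine ⟨U *ᵥ Pi.single i 1, ?_, ?_⟩
    · rw [← hnp, hs]
      simp [Pi.single_apply, sq, Finset.sum_ite_eq']
    · rw [hMspec, auxConjQuad, hs]
      simp [Pi.single_apply, sq, Finset.sum_ite_eq']


/-- lower bounds for f(r,M) in terms of the extreme eigenvalues of M
and the norm of r. -/
theorem fRM_lower_bounds
    {n : ℕ} (hn : 1 ≤ n) (r : Vec n) (M : Matrix (Fin n) (Fin n) ℝ) (hM : M.PosDef) :
    (1 : ℝ) / 2 * Real.log (maxEig M) + ((n : ℝ) - 1) / 2 * Real.log (minEig M)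
      ≤ fRM r M ∧
    (r ≠ 0 →
      (1 : ℝ) / 2 * (1 + Real.log ((eNorm r) ^ 2 / (n : ℝ)))
          + ((n : ℝ) - 1) / 2 * Real.log (minEig M)
        ≤ fRM r M) := by
  obtain ⟨d, hdpos, hdet, T, hQ, hQinv, hT, hvec⟩ := auxExistsSpec M hM
  set S := {s : ℝ | ∃ x : Fin n → ℝ, eNorm x = 1 ∧ s = x ⬝ᵥ M.mulVec x} with hS
  -- unit-norm characterization
  have hunit : ∀ x : Fin n → ℝ, eNorm x = 1 → ∑ j, (x j)^2 = 1 := by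
    intro x hx
    have h0 : (0:ℝ) ≤ ∑ j, (x j)^2 := Finset.sum_nonneg fun j _ => sq_nonneg _
    have := congrArg (fun t => t^2) hx
    simpa [eNorm, Real.sq_sqrt h0] using this
  -- membership of eigenvalues
  have hmem : ∀ i, d i ∈ S := by
    intro i
    obtain ⟨v, hv1, hv2⟩ := hvec i
    exact ⟨v, by simp [eNorm, hv1], hv2.symm⟩
  -- extremal indices
  obtain ⟨j0, -, hj0⟩ := Finset.exists_max_image Finset.univ d ⟨⟨0, hn⟩, Finset.mem_univ _⟩
  obtain ⟨j1, -, hj1⟩ := Finset.exists_min_image Finset.univ d ⟨⟨0, hn⟩, Finset.mem_univ _⟩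
  simp only [Finset.mem_univ, forall_true_left] at hj0 hj1
  have hj0' : ∀ i, d i ≤ d j0 := hj0
  have hj1' : ∀ i, d j1 ≤ d i := hj1
  -- bounds on Rayleigh set
  have hub : ∀ s ∈ S, s ≤ d j0 := by
    rintro s ⟨x, hx, rfl⟩
    rw [show M.mulVec x = M *ᵥ x from rfl, hQ]
    calc ∑ i, d i * (T x i)^2 ≤ ∑ i, d j0 * (T x i)^2 :=
          Finset.sum_le_sum fun i _ => mul_le_mul_of_nonneg_right (hj0' i) (sq_nonneg _)
      _ = d j0 * ∑ i, (T x i)^2 := by rw [Finset.mul_sum]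
      _ = d j0 := by rw [hT, hunit x hx, mul_one]
  have hlb : ∀ s ∈ S, d j1 ≤ s := by
    rintro s ⟨x, hx, rfl⟩
    rw [show M.mulVec x = M *ᵥ x from rfl, hQ]
    calc d j1 = d j1 * ∑ i, (T x i)^2 := by rw [hT, hunit x hx, mul_one]
      _ = ∑ i, d j1 * (T x i)^2 := Finset.mul_sum _ _ _
      _ ≤ ∑ i, d i * (T x i)^2 :=
          Finset.sum_le_sum fun i _ => mul_le_mul_of_nonneg_right (hj1' i) (sq_nonneg _)
  have hSne : S.Nonempty := ⟨d j0, hmem j0⟩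
  have hBdd : BddBelow S := ⟨d j1, hlb⟩
  have hBddA : BddAbove S := ⟨d j0, hub⟩
  -- minEig / maxEig bounds
  have hminle : ∀ i, minEig M ≤ d i := fun i => csInf_le hBdd (hmem i)
  have hminge : d j1 ≤ minEig M := le_csInf hSne hlb
  have hminpos : 0 < minEig M := lt_of_lt_of_le (hdpos j1) hminge
  have hmaxge : ∀ i, d i ≤ maxEig M := fun i => le_csSup hBddA (hmem i)
  have hmaxle : maxEig M ≤ d j0 := csSup_le hSne hub
  have hmaxpos : 0 < maxEig M := lt_of_lt_of_le (hdpos j0) (hmaxge j0)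
  -- log det
  have hlogdet : Real.log M.det = Real.log (d j0) + ∑ i ∈ Finset.univ.erase j0, Real.log (d i) := by
    rw [hdet, Real.log_prod fun i _ => (hdpos i).ne',
      ← Finset.add_sum_erase Finset.univ (fun i => Real.log (d i)) (Finset.mem_univ j0)]
  -- erase sum bound
  have hcard : ((Finset.univ.erase j0).card : ℝ) = (n : ℝ) - 1 := by
    rw [Finset.card_erase_of_mem (Finset.mem_univ j0)]
    simp only [Finset.card_univ, Fintype.card_fin]
    rw [Nat.cast_sub hn]; norm_num
  have herase : ((n : ℝ) - 1) * Real.log (minEig M) ≤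
      ∑ i ∈ Finset.univ.erase j0, Real.log (d i) := by
    calc ((n : ℝ) - 1) * Real.log (minEig M)
        = ∑ _i ∈ Finset.univ.erase j0, Real.log (minEig M) := by
          rw [Finset.sum_const, nsmul_eq_mul, hcard]
      _ ≤ ∑ i ∈ Finset.univ.erase j0, Real.log (d i) :=
          Finset.sum_le_sum fun i _ => Real.log_le_log hminpos (hminle i)
  have hlogmax : Real.log (maxEig M) ≤ Real.log (d j0) := Real.log_le_log hmaxpos hmaxle
  -- quadratic term
  have hQr : r ⬝ᵥ (M⁻¹ *ᵥ r) = ∑ i, (d i)⁻¹ * (T r i)^2 := hQinv r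
  have hQnonneg : 0 ≤ r ⬝ᵥ (M⁻¹ *ᵥ r) := by
    rw [hQr]
    exact Finset.sum_nonneg fun i _ => mul_nonneg (inv_nonneg.mpr (hdpos i).le) (sq_nonneg _)
  constructor
  · unfold fRM
    rw [hlogdet]
    linarith
  · intro hr
    set s := ∑ j, (r j)^2 with hsdef
    have hspos : 0 < s := by
      obtain ⟨i, hi⟩ := Function.ne_iff.mp hr
      have : (0:ℝ) < (r i)^2 := by have := abs_pos.mpr hi; nlinarith [sq_abs (r i)]
      exact lt_of_lt_of_le this
        (Finset.single_le_sum (fun j _ => sq_nonneg (r j)) (Finset.mem_univ i))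
    have hEr : (eNorm r)^2 = s := by
      rw [eNorm, Real.sq_sqrt (Finset.sum_nonneg fun j _ => sq_nonneg _)]
    have hQlower : s / d j0 ≤ r ⬝ᵥ (M⁻¹ *ᵥ r) := by
      rw [hQr]
      calc s / d j0 = (d j0)⁻¹ * ∑ i, (T r i)^2 := by
            rw [hT, div_eq_inv_mul]
        _ = ∑ i, (d j0)⁻¹ * (T r i)^2 := Finset.mul_sum _ _ _
        _ ≤ ∑ i, (d i)⁻¹ * (T r i)^2 :=
            Finset.sum_le_sum fun i _ =>
              mul_le_mul_of_nonneg_right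
                (inv_anti₀ (hdpos i) (hj0' i)) (sq_nonneg _)
    have hnpos : (0:ℝ) < n := by exact_mod_cast Nat.lt_of_lt_of_le Nat.zero_lt_one hn
    have hlog1 : Real.log (s / (n:ℝ)) ≤ Real.log s := by
      apply Real.log_le_log (div_pos hspos hnpos)
      exact div_le_self hspos.le (by exact_mod_cast hn)
    have hlog2 : Real.log (s / d j0) = Real.log s - Real.log (d j0) :=
      Real.log_div hspos.ne' (hdpos j0).ne'
    have hlog3 : Real.log (s / d j0) ≤ s / d j0 - 1 :=
      Real.log_le_sub_one_of_pos (div_pos hspos (hdpos j0))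
    unfold fRM
    rw [hlogdet, hEr]
    linarith
end
end

section
/- For every ρ ∈ ℝ and every α > 0 the set D_{ρ,α} := {(r, M) ∈ ℝ^n × ℝ^{n×n} : M is symmetric positive definite, λ_min(M) ≥ α, and f(r, M) ≤ ρ} is compact, where λ_min(M) denotes the smallest eigenvalue of M. -/
open Matrix Real Filter Topology Bornology
open scoped Pointwise

noncomputable section

namespace Aux

variable {M : Matrix (Fin n) (Fin n) ℝ} (hM : M.IsHermitian)

/-- coordinates in the eigenbasis -/
def coords (hM : M.IsHermitian) (x : Fin n → ℝ) : Fin n → ℝ :=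
  fun i => hM.eigenvectorBasis.repr ((WithLp.equiv 2 _).symm x) i

lemma dot_eq_sum_coords (x y : Fin n → ℝ) :
    x ⬝ᵥ y = ∑ i, coords hM x i * coords hM y i := by
  have h1 : x ⬝ᵥ y = (inner ℝ ((WithLp.equiv 2 _).symm x) ((WithLp.equiv 2 _).symm y) : ℝ) := by
    rw [EuclideanSpace.inner_eq_star_dotProduct, dotProduct_comm]
    rfl
  rw [h1, ← hM.eigenvectorBasis.repr.inner_map_map]
  rw [EuclideanSpace.inner_eq_star_dotProduct, dotProduct_comm]
  rfl

lemma mulVec_eq_sum (y : Fin n → ℝ) :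
    M *ᵥ y = ∑ i, (hM.eigenvalues i * coords hM y i) •
      (WithLp.equiv 2 _) (hM.eigenvectorBasis i) := by
  have h0 : y = ∑ i, coords hM y i • (WithLp.equiv 2 _) (hM.eigenvectorBasis i) := by
    have := hM.eigenvectorBasis.sum_repr ((WithLp.equiv 2 _).symm y)
    apply_fun (WithLp.equiv 2 (Fin n → ℝ)) at this
    simpa [coords] using this.symm
  conv_lhs => rw [h0]
  rw [← Matrix.mulVecLin_apply, map_sum]
  refine Finset.sum_congr rfl fun i _ => ?_
  rw [LinearMap.map_smul, Matrix.mulVecLin_apply, (show M *ᵥ (WithLp.equiv 2 _) (hM.eigenvectorBasis i) = hM.eigenvalues i • (WithLp.equiv 2 _) (hM.eigenvectorBasis i) from hM.mulVec_eigenvectorBasis i), smul_smul, mul_comm (coords hM y i)]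



lemma coords_basis (i : Fin n) :
    coords hM ((WithLp.equiv 2 _) (hM.eigenvectorBasis i)) = fun j => if j = i then 1 else 0 := by
  funext j
  simp [coords, Equiv.symm_apply_apply, OrthonormalBasis.repr_self, EuclideanSpace.single_apply]

lemma dotProduct_sum' (x : Fin n → ℝ) (f : Fin n → (Fin n → ℝ)) :
    x ⬝ᵥ (∑ i, f i) = ∑ i, x ⬝ᵥ f i := by
  simp only [dotProduct, Finset.sum_apply, Finset.mul_sum]
  exact Finset.sum_comm ..

lemma dot_mulVec_eq (x y : Fin n → ℝ) :
    x ⬝ᵥ M *ᵥ y = ∑ i, hM.eigenvalues i * (coords hM x i * coords hM y i) := by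
  rw [mulVec_eq_sum hM, dotProduct_sum']
  refine Finset.sum_congr rfl fun i _ => ?_
  rw [dotProduct_smul, smul_eq_mul]
  have hx : x ⬝ᵥ (WithLp.equiv 2 _) (hM.eigenvectorBasis i) = coords hM x i := by
    rw [dot_eq_sum_coords hM, coords_basis hM]
    simp
  rw [hx]; ring

lemma sum_sq_coords (x : Fin n → ℝ) : ∑ i, coords hM x i ^ 2 = ∑ j, x j ^ 2 := by
  have h := dot_eq_sum_coords hM x x
  simp only [dotProduct] at h
  simpa [sq] using h.symm

lemma eNorm_sq (x : Fin n → ℝ) : eNorm x ^ 2 = ∑ j, x j ^ 2 :=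
  Real.sq_sqrt (Finset.sum_nonneg fun j _ => sq_nonneg _)

lemma eNorm_basis (i : Fin n) :
    eNorm ((WithLp.equiv 2 _) (hM.eigenvectorBasis i)) = 1 := by
  have h : eNorm ((WithLp.equiv 2 _) (hM.eigenvectorBasis i)) = ‖hM.eigenvectorBasis i‖ := by
    rw [EuclideanSpace.norm_eq, eNorm]
    congr 1
    exact Finset.sum_congr rfl fun j _ => by rw [Real.norm_eq_abs, sq_abs]; rfl
  rw [h, hM.eigenvectorBasis.orthonormal.1 i]

lemma rayleigh_basis (i : Fin n) :
    (WithLp.equiv 2 _) (hM.eigenvectorBasis i) ⬝ᵥ M *ᵥ (WithLp.equiv 2 _) (hM.eigenvectorBasis i)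
      = hM.eigenvalues i := by
  rw [dot_mulVec_eq hM, coords_basis hM]
  simp



lemma sum_sq_of_eNorm_one {x : Fin n → ℝ} (hx : eNorm x = 1) : ∑ j, x j ^ 2 = 1 := by
  have h0 : (0:ℝ) ≤ ∑ j, x j ^ 2 := Finset.sum_nonneg fun j _ => sq_nonneg _
  have := Real.sq_sqrt h0
  rw [show Real.sqrt (∑ j, x j ^ 2) = 1 from hx] at this
  simpa using this.symm

lemma quadform_ge {a : ℝ} (hlb : ∀ i, a ≤ hM.eigenvalues i) (x : Fin n → ℝ) :
    a * ∑ j, x j ^ 2 ≤ x ⬝ᵥ M *ᵥ x := by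
  rw [dot_mulVec_eq hM, ← sum_sq_coords hM x, Finset.mul_sum]
  refine Finset.sum_le_sum fun i _ => ?_
  have := mul_le_mul_of_nonneg_right (hlb i) (sq_nonneg (coords hM x i))
  calc a * coords hM x i ^ 2 ≤ hM.eigenvalues i * coords hM x i ^ 2 := this
    _ = hM.eigenvalues i * (coords hM x i * coords hM x i) := by ring

lemma quadform_le {b : ℝ} (hub : ∀ i, hM.eigenvalues i ≤ b) (x : Fin n → ℝ) :
    x ⬝ᵥ M *ᵥ x ≤ b * ∑ j, x j ^ 2 := by
  rw [dot_mulVec_eq hM, ← sum_sq_coords hM x, Finset.mul_sum]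
  refine Finset.sum_le_sum fun i _ => ?_
  have := mul_le_mul_of_nonneg_right (hub i) (sq_nonneg (coords hM x i))
  calc hM.eigenvalues i * (coords hM x i * coords hM x i)
      = hM.eigenvalues i * coords hM x i ^ 2 := by ring
    _ ≤ b * coords hM x i ^ 2 := this

lemma cs_sum_abs (c d : Fin n → ℝ) :
    ∑ i, |c i| * |d i| ≤ Real.sqrt (∑ i, c i ^ 2) * Real.sqrt (∑ i, d i ^ 2) := by
  have h := Finset.sum_mul_sq_le_sq_mul_sq Finset.univ (fun i => |c i|) (fun i => |d i|)
  simp only [sq_abs] at h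
  have h1 : (0:ℝ) ≤ ∑ i, |c i| * |d i| :=
    Finset.sum_nonneg fun i _ => mul_nonneg (abs_nonneg _) (abs_nonneg _)
  calc ∑ i, |c i| * |d i| = Real.sqrt ((∑ i, |c i| * |d i|) ^ 2) := (Real.sqrt_sq h1).symm
    _ ≤ Real.sqrt ((∑ i, c i ^ 2) * ∑ i, d i ^ 2) := Real.sqrt_le_sqrt h
    _ = _ := Real.sqrt_mul (Finset.sum_nonneg fun i _ => sq_nonneg _) _

lemma abs_bilin_le {b : ℝ} (hb : 0 ≤ b) (hub : ∀ i, |hM.eigenvalues i| ≤ b)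
    (x y : Fin n → ℝ) : |x ⬝ᵥ M *ᵥ y| ≤ b * (eNorm x * eNorm y) := by
  rw [dot_mulVec_eq hM]
  calc |∑ i, hM.eigenvalues i * (coords hM x i * coords hM y i)|
      ≤ ∑ i, |hM.eigenvalues i * (coords hM x i * coords hM y i)| :=
        Finset.abs_sum_le_sum_abs _ _
    _ ≤ ∑ i, b * (|coords hM x i| * |coords hM y i|) := by
        refine Finset.sum_le_sum fun i _ => ?_
        rw [abs_mul, abs_mul]
        exact mul_le_mul_of_nonneg_right (hub i)
          (mul_nonneg (abs_nonneg _) (abs_nonneg _))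
    _ = b * ∑ i, |coords hM x i| * |coords hM y i| := by rw [Finset.mul_sum]
    _ ≤ b * (Real.sqrt (∑ i, coords hM x i ^ 2) * Real.sqrt (∑ i, coords hM y i ^ 2)) :=
        mul_le_mul_of_nonneg_left (cs_sum_abs _ _) hb
    _ = b * (eNorm x * eNorm y) := by
        rw [sum_sq_coords hM x, sum_sq_coords hM y]; rfl

lemma bilin_sq_le (h0 : ∀ i, 0 ≤ hM.eigenvalues i) (x y : Fin n → ℝ) :
    (x ⬝ᵥ M *ᵥ y) ^ 2 ≤ (x ⬝ᵥ M *ᵥ x) * (y ⬝ᵥ M *ᵥ y) := by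
  rw [dot_mulVec_eq hM x y, dot_mulVec_eq hM x x, dot_mulVec_eq hM y y]
  have h := Finset.sum_mul_sq_le_sq_mul_sq Finset.univ
    (fun i => Real.sqrt (hM.eigenvalues i) * coords hM x i)
    (fun i => Real.sqrt (hM.eigenvalues i) * coords hM y i)
  calc (∑ i, hM.eigenvalues i * (coords hM x i * coords hM y i)) ^ 2
      = (∑ i, (Real.sqrt (hM.eigenvalues i) * coords hM x i) *
          (Real.sqrt (hM.eigenvalues i) * coords hM y i)) ^ 2 := by
        congr 1; refine Finset.sum_congr rfl fun i _ => ?_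
        rw [show (Real.sqrt (hM.eigenvalues i) * coords hM x i) *
          (Real.sqrt (hM.eigenvalues i) * coords hM y i)
          = (Real.sqrt (hM.eigenvalues i) * Real.sqrt (hM.eigenvalues i)) *
            (coords hM x i * coords hM y i) from by ring,
          Real.mul_self_sqrt (h0 i)]
    _ ≤ _ := by
        refine le_trans h (le_of_eq ?_)
        congr 1 <;> refine Finset.sum_congr rfl fun i _ => ?_ <;>
          rw [mul_pow, Real.sq_sqrt (h0 i)] <;> ring

lemma eNorm_single (i : Fin n) : eNorm (Pi.single i 1 : Fin n → ℝ) = 1 := by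
  rw [eNorm, show ∑ j, (Pi.single i 1 : Fin n → ℝ) j ^ 2 = 1 from by
    simp [Pi.single_apply, apply_ite (fun t : ℝ => t ^ 2)]]
  exact Real.sqrt_one

include hM in
lemma bddBelow_rayleigh :
    BddBelow {r : ℝ | ∃ x : Fin n → ℝ, eNorm x = 1 ∧ r = x ⬝ᵥ M.mulVec x} := by
  refine ⟨-(∑ i, |hM.eigenvalues i|), fun r hr => ?_⟩
  obtain ⟨x, hx, rfl⟩ := hr
  have hsum : ∑ i, coords hM x i ^ 2 = 1 := by
    rw [sum_sq_coords hM x]; exact sum_sq_of_eNorm_one hx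
  have hc : ∀ i, coords hM x i ^ 2 ≤ 1 := fun i =>
    le_trans (Finset.single_le_sum (fun j _ => sq_nonneg (coords hM x j)) (Finset.mem_univ i))
      hsum.le
  rw [show M.mulVec x = M *ᵥ x from rfl, dot_mulVec_eq hM]
  have hterm : ∀ i, -(|hM.eigenvalues i|) ≤ hM.eigenvalues i * (coords hM x i * coords hM x i) := by
    intro i
    have h1 : |coords hM x i * coords hM x i| ≤ 1 := by
      rw [← sq, abs_of_nonneg (sq_nonneg _)]; exact hc i
    have h2 : |hM.eigenvalues i * (coords hM x i * coords hM x i)| ≤ |hM.eigenvalues i| := by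
      rw [abs_mul]; exact mul_le_of_le_one_right (abs_nonneg _) h1
    linarith [neg_abs_le (hM.eigenvalues i * (coords hM x i * coords hM x i))]
  calc -(∑ i, |hM.eigenvalues i|) = ∑ i, -(|hM.eigenvalues i|) := by rw [Finset.sum_neg_distrib]
    _ ≤ _ := Finset.sum_le_sum fun i _ => hterm i

end Aux

set_option maxHeartbeats 1000000 in
/-- level compactness of f: for every ρ and α > 0 the set
D_{ρ,α} = {(r,M) : M symmetric positive definite, λ_min(M) ≥ α, f(r,M) ≤ ρ}
is compact. -/
theorem fRM_level_compact
    {n : ℕ} (ρ α : ℝ) (hα : 0 < α) :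
    IsCompact {rM : Vec n × Matrix (Fin n) (Fin n) ℝ |
      rM.2.PosDef ∧ α ≤ minEig rM.2 ∧ fRM rM.1 rM.2 ≤ ρ} := by
  rcases Nat.eq_zero_or_pos n with hn | hn
  · subst hn
    convert isCompact_empty
    ext rM
    simp only [Set.mem_setOf_eq, Set.mem_empty_iff_false, iff_false, not_and]
    intro hpd hmin
    exfalso
    have hempty : {r : ℝ | ∃ x : Fin 0 → ℝ, eNorm x = 1 ∧ r = x ⬝ᵥ rM.2.mulVec x} = ∅ := by
      ext r
      simp only [Set.mem_setOf_eq, Set.mem_empty_iff_false, iff_false, not_exists]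
      intro x hx
      have h0 : eNorm x = 0 := by simp [eNorm]
      rw [h0] at hx
      exact zero_ne_one hx.1
    have h0 : minEig rM.2 = 0 := by rw [minEig, hempty, Real.sInf_empty]
    rw [h0] at hmin
    linarith
  · haveI : NeZero n := ⟨hn.ne'⟩
    set β := Real.exp (2*ρ) / α ^ (n-1) with hβdef
    have hβpos : 0 < β := div_pos (Real.exp_pos _) (pow_pos hα _)
    set A := β * (2*ρ - n * Real.log α) with hAdef
    set Cr := Real.sqrt A with hCrdef
    set T : Set (Vec n × Matrix (Fin n) (Fin n) ℝ) :=
      {rM | rM.2.IsHermitian ∧ ∀ x : Fin n → ℝ, eNorm x = 1 → α ≤ x ⬝ᵥ rM.2 *ᵥ x} with hTdef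
    -- eigenvalue lower bound for members of T
    have heigT : ∀ rM : Vec n × Matrix (Fin n) (Fin n) ℝ, ∀ hherm : rM.2.IsHermitian,
        (∀ x : Fin n → ℝ, eNorm x = 1 → α ≤ x ⬝ᵥ rM.2 *ᵥ x) →
        ∀ i, α ≤ hherm.eigenvalues i := by
      intro rM hherm hray i
      have := hray _ (Aux.eNorm_basis hherm i)
      rwa [Aux.rayleigh_basis hherm i] at this
    have hdet_lb : ∀ rM ∈ T, α ^ n ≤ rM.2.det := by
      rintro rM ⟨hherm, hray⟩
      have hev := heigT rM hherm hray
      have hdet : rM.2.det = ∏ i, hherm.eigenvalues i := by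
        simpa using hherm.det_eq_prod_eigenvalues
      rw [hdet, show α ^ n = ∏ _i : Fin n, α from by
        rw [Finset.prod_const, Finset.card_univ, Fintype.card_fin]]
      exact Finset.prod_le_prod (fun i _ => hα.le) (fun i _ => hev i)
    have hdet_pos : ∀ rM ∈ T, (0:ℝ) < rM.2.det := fun rM h =>
      lt_of_lt_of_le (pow_pos hα n) (hdet_lb rM h)
    -- T is closed
    have hTclosed : IsClosed T := by
      have h1 : IsClosed {rM : Vec n × Matrix (Fin n) (Fin n) ℝ | rM.2.IsHermitian} := by
        have hset : {rM : Vec n × Matrix (Fin n) (Fin n) ℝ | rM.2.IsHermitian}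
            = ⋂ (i : Fin n) (j : Fin n), {rM : Vec n × Matrix (Fin n) (Fin n) ℝ |
                rM.2 j i = rM.2 i j} := by
          ext rM
          simp only [Set.mem_setOf_eq, Set.mem_iInter, Matrix.IsHermitian]
          constructor
          · intro h i j
            have := congrFun (congrFun h i) j
            simpa [Matrix.conjTranspose_apply] using this
          · intro h
            ext i j
            simpa [Matrix.conjTranspose_apply] using h i j
        rw [hset]
        refine isClosed_iInter fun i => isClosed_iInter fun j => isClosed_eq ?_ ?_
        · exact ((continuous_apply i).comp ((continuous_apply j).comp continuous_snd))
        · exact ((continuous_apply j).comp ((continuous_apply i).comp continuous_snd))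
      have h2 : IsClosed {rM : Vec n × Matrix (Fin n) (Fin n) ℝ |
          ∀ x : Fin n → ℝ, eNorm x = 1 → α ≤ x ⬝ᵥ rM.2 *ᵥ x} := by
        have hset : {rM : Vec n × Matrix (Fin n) (Fin n) ℝ |
            ∀ x : Fin n → ℝ, eNorm x = 1 → α ≤ x ⬝ᵥ rM.2 *ᵥ x}
            = ⋂ (x : Fin n → ℝ), {rM : Vec n × Matrix (Fin n) (Fin n) ℝ |
                eNorm x = 1 → α ≤ x ⬝ᵥ rM.2 *ᵥ x} := by
          ext rM; simp [Set.mem_iInter]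
        rw [hset]
        refine isClosed_iInter fun x => ?_
        by_cases hx : eNorm x = 1
        · have : {rM : Vec n × Matrix (Fin n) (Fin n) ℝ |
              eNorm x = 1 → α ≤ x ⬝ᵥ rM.2 *ᵥ x}
              = {rM : Vec n × Matrix (Fin n) (Fin n) ℝ | α ≤ x ⬝ᵥ rM.2 *ᵥ x} := by
            ext rM; simp [hx]
          rw [this]
          exact isClosed_le continuous_const
            (Continuous.dotProduct continuous_const
              (Continuous.matrix_mulVec continuous_snd continuous_const))
        · have : {rM : Vec n × Matrix (Fin n) (Fin n) ℝ |
              eNorm x = 1 → α ≤ x ⬝ᵥ rM.2 *ᵥ x} = Set.univ := by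
            ext rM; simp [hx]
          rw [this]; exact isClosed_univ
      exact h1.inter h2
    -- continuity of fRM on T
    have hcont : ContinuousOn (fun rM : Vec n × Matrix (Fin n) (Fin n) ℝ =>
        fRM rM.1 rM.2) T := by
      intro rM hrM
      apply ContinuousAt.continuousWithinAt
      have hdet0 : rM.2.det ≠ 0 := (hdet_pos rM hrM).ne'
      have hdetc : Continuous fun p : Vec n × Matrix (Fin n) (Fin n) ℝ => p.2.det :=
        continuous_snd.matrix_det
      have hinv : ContinuousAt (fun p : Vec n × Matrix (Fin n) (Fin n) ℝ => p.2⁻¹) rM := by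
        have heq : (fun p : Vec n × Matrix (Fin n) (Fin n) ℝ => p.2⁻¹)
            = fun p => p.2.det⁻¹ • p.2.adjugate := by
          funext p; rw [Matrix.inv_def, Ring.inverse_eq_inv]
        rw [heq]
        exact (hdetc.continuousAt.inv₀ hdet0).smul
          continuous_snd.matrix_adjugate.continuousAt
      have hc1 : Continuous fun q : (Fin n → ℝ) × Matrix (Fin n) (Fin n) ℝ =>
          q.1 ⬝ᵥ q.2 *ᵥ q.1 :=
        Continuous.dotProduct continuous_fst
          (Continuous.matrix_mulVec continuous_snd continuous_fst)
      have hmap : ContinuousAt (fun p : Vec n × Matrix (Fin n) (Fin n) ℝ =>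
          ((p.1, p.2⁻¹) : (Fin n → ℝ) × Matrix (Fin n) (Fin n) ℝ)) rM :=
        continuous_fst.continuousAt.prodMk hinv
      have hp1 : ContinuousAt (fun p : Vec n × Matrix (Fin n) (Fin n) ℝ =>
          p.1 ⬝ᵥ p.2⁻¹ *ᵥ p.1) rM := hc1.continuousAt.comp hmap
      have hp2 : ContinuousAt (fun p : Vec n × Matrix (Fin n) (Fin n) ℝ =>
          Real.log p.2.det) rM := hdetc.continuousAt.log hdet0
      exact continuousAt_const.mul (hp1.add hp2)
    -- the level set equals T ∩ sublevel
    have hSeq : {rM : Vec n × Matrix (Fin n) (Fin n) ℝ |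
        rM.2.PosDef ∧ α ≤ minEig rM.2 ∧ fRM rM.1 rM.2 ≤ ρ}
        = T ∩ (fun rM : Vec n × Matrix (Fin n) (Fin n) ℝ => fRM rM.1 rM.2) ⁻¹'
            Set.Iic ρ := by
      ext rM
      simp only [Set.mem_setOf_eq, Set.mem_inter_iff, Set.mem_preimage, Set.mem_Iic, hTdef]
      constructor
      · rintro ⟨hpd, hmin, hf⟩
        refine ⟨⟨hpd.1, fun x hx => ?_⟩, hf⟩
        exact le_trans hmin (csInf_le (Aux.bddBelow_rayleigh hpd.1) ⟨x, hx, rfl⟩)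
      · rintro ⟨⟨hherm, hray⟩, hf⟩
        have hev := heigT rM hherm hray
        have hstar : ∀ x : Fin n → ℝ, star x = x := fun x => funext fun j => star_trivial _
        have hpd : rM.2.PosDef := by
          refine Matrix.PosDef.of_dotProduct_mulVec_pos hherm fun x hx => ?_
          rw [hstar]
          have h1 : α * ∑ j, x j ^ 2 ≤ x ⬝ᵥ rM.2 *ᵥ x :=
            Aux.quadform_ge hherm hev x
          have h2 : 0 < ∑ j, x j ^ 2 := by
            obtain ⟨j, hj⟩ := Function.ne_iff.mp hx
            exact Finset.sum_pos' (fun k _ => sq_nonneg _)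
              ⟨j, Finset.mem_univ j, pow_pos (abs_pos.mpr hj) 2 |>.trans_eq (sq_abs _)⟩
          calc (0:ℝ) < α * ∑ j, x j ^ 2 := by positivity
            _ ≤ _ := h1
        refine ⟨hpd, ?_, hf⟩
        refine le_csInf ⟨_, ⟨Pi.single (0 : Fin n) 1, Aux.eNorm_single _, rfl⟩⟩ ?_
        rintro b ⟨x, hx, rfl⟩
        exact hray x hx
    have hSclosed : IsClosed {rM : Vec n × Matrix (Fin n) (Fin n) ℝ |
        rM.2.PosDef ∧ α ≤ minEig rM.2 ∧ fRM rM.1 rM.2 ≤ ρ} := by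
      rw [hSeq]
      exact hcont.preimage_isClosed_of_isClosed hTclosed isClosed_Iic
    -- a compact superset
    have hK1 : IsCompact (Set.univ.pi fun _ : Fin n => Set.Icc (-Cr) Cr : Set (Vec n)) :=
      isCompact_univ_pi fun _ => isCompact_Icc
    have hK2 : IsCompact {M : Matrix (Fin n) (Fin n) ℝ | ∀ i j, M i j ∈ Set.Icc (-β) β} := by
      have h : IsCompact ((Set.univ.pi fun _ : Fin n => Set.univ.pi fun _ : Fin n =>
          Set.Icc (-β) β) : Set (Matrix (Fin n) (Fin n) ℝ)) :=
        isCompact_univ_pi fun _ => isCompact_univ_pi fun _ => isCompact_Icc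
      have heq : {M : Matrix (Fin n) (Fin n) ℝ | ∀ i j, M i j ∈ Set.Icc (-β) β}
          = ((Set.univ.pi fun _ : Fin n => Set.univ.pi fun _ : Fin n => Set.Icc (-β) β) :
              Set (Fin n → Fin n → ℝ)) := by
        ext M
        constructor
        · exact fun hM i _ j _ => hM i j
        · exact fun hM i j => hM i (Set.mem_univ i) j (Set.mem_univ j)
      rw [heq]
      exact h
    have hsub : {rM : Vec n × Matrix (Fin n) (Fin n) ℝ |
        rM.2.PosDef ∧ α ≤ minEig rM.2 ∧ fRM rM.1 rM.2 ≤ ρ}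
        ⊆ (Set.univ.pi fun _ : Fin n => Set.Icc (-Cr) Cr : Set (Vec n)) ×ˢ
          {M : Matrix (Fin n) (Fin n) ℝ | ∀ i j, M i j ∈ Set.Icc (-β) β} := by
      rintro ⟨r, M⟩ ⟨hpd, hmin, hf⟩
      have hherm := hpd.1
      have hev : ∀ i, α ≤ hherm.eigenvalues i := fun i =>
        le_trans hmin (csInf_le (Aux.bddBelow_rayleigh hherm)
          ⟨_, Aux.eNorm_basis hherm i, (Aux.rayleigh_basis hherm i).symm⟩)
      have h0ev : ∀ i, 0 ≤ hherm.eigenvalues i := fun i => hα.le.trans (hev i)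
      have hdet : M.det = ∏ i, hherm.eigenvalues i := by
        simpa using hherm.det_eq_prod_eigenvalues
      have hdetpos : 0 < M.det := hpd.det_pos
      have hαn : α ^ n ≤ M.det := by
        rw [hdet, show α ^ n = ∏ _i : Fin n, α from by
          rw [Finset.prod_const, Finset.card_univ, Fintype.card_fin]]
        exact Finset.prod_le_prod (fun i _ => hα.le) (fun i _ => hev i)
      have hstar : ∀ x : Fin n → ℝ, star x = x := fun x => funext fun j => star_trivial _
      have hQ0 : 0 ≤ r ⬝ᵥ M⁻¹ *ᵥ r := by
        have := hpd.inv.posSemidef.dotProduct_mulVec_nonneg r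
        rwa [hstar] at this
      have hfr : (1:ℝ)/2 * (r ⬝ᵥ M⁻¹ *ᵥ r + Real.log M.det) ≤ ρ := hf
      have hlogle : Real.log M.det ≤ 2*ρ := by linarith
      have hdetle : M.det ≤ Real.exp (2*ρ) := by
        rw [← Real.exp_log hdetpos]
        exact Real.exp_le_exp.mpr hlogle
      have hub : ∀ i, hherm.eigenvalues i ≤ β := by
        intro i
        have h1 : α ^ (n-1) ≤ ∏ j ∈ Finset.univ.erase i, hherm.eigenvalues j := by
          rw [show α ^ (n-1) = ∏ _j ∈ Finset.univ.erase i, α from by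
            rw [Finset.prod_const, Finset.card_erase_of_mem (Finset.mem_univ i),
              Finset.card_univ, Fintype.card_fin]]
          exact Finset.prod_le_prod (fun j _ => hα.le) (fun j _ => hev j)
        have h2 : hherm.eigenvalues i * α ^ (n-1) ≤ M.det := by
          rw [hdet, ← Finset.mul_prod_erase Finset.univ _ (Finset.mem_univ i)]
          exact mul_le_mul_of_nonneg_left h1 (h0ev i)
        rw [hβdef]
        rw [le_div_iff₀ (pow_pos hα _)]
        exact h2.trans hdetle
      constructor
      · -- vector component bounds
        have hlogα : (n:ℝ) * Real.log α ≤ Real.log M.det := by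
          rw [← Real.log_pow]
          exact Real.log_le_log (pow_pos hα n) hαn
        have hQle : r ⬝ᵥ M⁻¹ *ᵥ r ≤ 2*ρ - n * Real.log α := by linarith
        have hunit : IsUnit M.det := isUnit_iff_ne_zero.mpr hdetpos.ne'
        set y := M⁻¹ *ᵥ r with hy
        have hMy : M *ᵥ y = r := by
          rw [hy, Matrix.mulVec_mulVec, Matrix.mul_nonsing_inv _ hunit, Matrix.one_mulVec]
        have hcs := Aux.bilin_sq_le hherm h0ev r y
        have hrr : r ⬝ᵥ M *ᵥ y = ∑ j, r j ^ 2 := by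
          rw [hMy]; simp [dotProduct, sq]
        have hyy : y ⬝ᵥ M *ᵥ y = r ⬝ᵥ M⁻¹ *ᵥ r := by
          rw [hMy, dotProduct_comm]
        have hMr : r ⬝ᵥ M *ᵥ r ≤ β * ∑ j, r j ^ 2 := Aux.quadform_le hherm hub r
        rw [hrr, hyy] at hcs
        have hS0 : 0 ≤ ∑ j, r j ^ 2 := Finset.sum_nonneg fun j _ => sq_nonneg _
        have hkey : ∑ j, r j ^ 2 ≤ β * (r ⬝ᵥ M⁻¹ *ᵥ r) := by
          rcases hS0.eq_or_lt with hS | hS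
          · rw [← hS]; positivity
          · have h3 : (∑ j, r j ^ 2)^2 ≤ (β * (r ⬝ᵥ M⁻¹ *ᵥ r)) * ∑ j, r j ^ 2 := by
              calc (∑ j, r j ^ 2)^2 ≤ (r ⬝ᵥ M *ᵥ r) * (r ⬝ᵥ M⁻¹ *ᵥ r) := hcs
                _ ≤ (β * ∑ j, r j ^ 2) * (r ⬝ᵥ M⁻¹ *ᵥ r) :=
                    mul_le_mul_of_nonneg_right hMr hQ0
                _ = (β * (r ⬝ᵥ M⁻¹ *ᵥ r)) * ∑ j, r j ^ 2 := by ring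
            nlinarith [h3, hS]
        have hsumA : ∑ j, r j ^ 2 ≤ A := by
          rw [hAdef]
          exact hkey.trans (mul_le_mul_of_nonneg_left hQle hβpos.le)
        have hA0 : 0 ≤ A := hS0.trans hsumA
        rw [Set.mem_univ_pi]
        intro j
        have hj2 : r j ^ 2 ≤ A :=
          le_trans (Finset.single_le_sum (fun k _ => sq_nonneg (r k)) (Finset.mem_univ j))
            hsumA
        have : |r j| ≤ Cr := by
          rw [hCrdef, ← Real.sqrt_sq_eq_abs]
          exact Real.sqrt_le_sqrt hj2
        exact ⟨neg_le_of_abs_le this, le_of_abs_le this⟩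
      · -- matrix component bounds
        intro i j
        have habs := Aux.abs_bilin_le hherm hβpos.le
          (fun k => by rw [abs_of_nonneg (h0ev k)]; exact hub k)
          (Pi.single i 1) (Pi.single j 1)
        have hMij : (Pi.single i 1 : Fin n → ℝ) ⬝ᵥ M *ᵥ (Pi.single j 1) = M i j := by
          simp [single_dotProduct, Matrix.mulVec_single]
        rw [hMij, Aux.eNorm_single, Aux.eNorm_single] at habs
        simp only [mul_one] at habs
        exact ⟨neg_le_of_abs_le habs, le_of_abs_le habs⟩
    exact (hK1.prod hK2).of_isClosed_subset hSclosed hsub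
end
end
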